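/- Let k ∈ ℕ, let D be an open subset of ℂ, let F : D → ℂ be holomorphic on D, and let s ∈ D with F(s) ≠ 0. Define M := max_{1 ≤ j ≤ k} ( |F^{(j)}(s)/F(s)| / j! )^{1/j} and N := max_{1 ≤ j ≤ k} ( |(F'/F)^{(j−1)}(s)| / j! )^{1/j}, where F^{(j)} denotes the j-th derivative and (F'/F)^{(j−1)} denotes the (j−1)-st derivative of the logarithmic derivative F'/F (which is holomorphic in a neighbourhood of s since F(s) ≠ 0). Then M/2 ≤ N ≤ 2M. -/

import Mathlib

open Finset


lemma st17_analytic_iter {f : ℂ → ℂ} {U : Set ℂ} (h : AnalyticOnNhd ℂ f U) (n : ℕ) :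
    AnalyticOnNhd ℂ (iteratedDeriv n f) U := by
  induction n with
  | zero => simpa [iteratedDeriv_zero] using h
  | succ n ih => rw [iteratedDeriv_succ]; exact ih.deriv

lemma st17_leibniz {f g : ℂ → ℂ} {U : Set ℂ} (hU : IsOpen U) (hf : AnalyticOnNhd ℂ f U)
    (hg : AnalyticOnNhd ℂ g U) (n : ℕ) :
    ∀ z ∈ U, iteratedDeriv n (fun w => f w * g w) z =
      ∑ i ∈ range (n + 1), (n.choose i : ℂ) *
        (iteratedDeriv i f z * iteratedDeriv (n - i) g z) := by
  induction n with
  | zero => intro z hz; simp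
  | succ n ih =>
    intro z hz
    have hD : ∀ (h : ℂ → ℂ), AnalyticOnNhd ℂ h U → ∀ m,
        HasDerivAt (iteratedDeriv m h) (iteratedDeriv (m + 1) h z) z := by
      intro h hh m
      have h1 := ((st17_analytic_iter hh m) z hz).differentiableAt.hasDerivAt
      rwa [← iteratedDeriv_succ] at h1
    rw [iteratedDeriv_succ]
    have hEq : Set.EqOn (iteratedDeriv n (fun w => f w * g w))
        (fun z => ∑ i ∈ range (n + 1), (n.choose i : ℂ) *
          (iteratedDeriv i f z * iteratedDeriv (n - i) g z)) U := ih
    rw [(hEq.eventuallyEq_of_mem (hU.mem_nhds hz)).deriv_eq]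
    have hsum : HasDerivAt (fun z => ∑ i ∈ range (n + 1), (n.choose i : ℂ) *
          (iteratedDeriv i f z * iteratedDeriv (n - i) g z))
        (∑ i ∈ range (n + 1), (n.choose i : ℂ) *
          (iteratedDeriv (i + 1) f z * iteratedDeriv (n - i) g z
            + iteratedDeriv i f z * iteratedDeriv (n - i + 1) g z)) z := by
      apply HasDerivAt.fun_sum
      intro i _
      exact ((hD f hf i).mul (hD g hg (n - i))).const_mul _
    rw [hsum.deriv,
      Finset.sum_choose_succ_mul (fun i j => iteratedDeriv i f z * iteratedDeriv j g z) n]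
    simp only [mul_add, Finset.sum_add_distrib]
    rw [add_comm]
    congr 1
    refine Finset.sum_congr rfl fun i hi => ?_
    rw [Nat.sub_add_comm (Nat.lt_succ_iff.mp (Finset.mem_range.mp hi))]

lemma st17_nat1 (n : ℕ) : (n + 1) + ∑ m ∈ range n, (m + 1) * 2 ^ m ≤ (n + 1) * 2 ^ n := by
  induction n with
  | zero => simp
  | succ n ih =>
    rw [Finset.sum_range_succ]
    have h2 : 1 ≤ 2 ^ (n + 1) := Nat.one_le_two_pow
    have : (n + 1) * 2 ^ (n + 1) = (n + 1) * 2 ^ n + (n + 1) * 2 ^ n := by ring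
    nlinarith [ih, pow_succ 2 n]

lemma st17_nat2 (n : ℕ) : (∑ m ∈ range n, (m + 1) * 2 ^ (n - 1 - m)) + (n + 1) ≤ (n + 1) * 2 ^ n := by
  induction n with
  | zero => simp
  | succ n ih =>
    rw [Finset.sum_range_succ]
    have hsplit : ∑ m ∈ range n, (m + 1) * 2 ^ (n - m) =
        2 * ∑ m ∈ range n, (m + 1) * 2 ^ (n - 1 - m) := by
      rw [Finset.mul_sum]
      refine Finset.sum_congr rfl fun m hm => ?_
      have hm' : m < n := Finset.mem_range.mp hm
      have : n - m = (n - 1 - m) + 1 := by omega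
      rw [this, pow_succ]; ring
    simp only [Nat.add_sub_cancel] at *
    rw [hsplit, Nat.sub_self, pow_zero, mul_one]
    have h2 : 1 ≤ 2 ^ (n + 1) := Nat.one_le_two_pow
    have : (n + 2) * 2 ^ (n + 1) = 2 * ((n + 1) * 2 ^ n) + 2 ^ (n + 1) := by ring
    nlinarith [ih, pow_succ 2 n]

theorem statement17 (k : ℕ) (hk : 1 ≤ k) (D : Set ℂ) (hD : IsOpen D)
    (F : ℂ → ℂ) (hF : DifferentiableOn ℂ F D) (s : ℂ) (hs : s ∈ D) (hFs : F s ≠ 0)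
    (M N : ℝ)
    (hM : M = (Finset.Icc 1 k).sup' (Finset.nonempty_Icc.mpr hk)
      (fun j => (‖iteratedDeriv j F s / F s‖ / (j.factorial : ℝ)) ^ ((j : ℝ))⁻¹))
    (hN : N = (Finset.Icc 1 k).sup' (Finset.nonempty_Icc.mpr hk)
      (fun j => (‖iteratedDeriv (j - 1) (fun z => deriv F z / F z) s‖ /
        (j.factorial : ℝ)) ^ ((j : ℝ))⁻¹)) :
    M / 2 ≤ N ∧ N ≤ 2 * M := by
  set L : ℂ → ℂ := fun z => deriv F z / F z with hLdef
  set U : Set ℂ := D ∩ F ⁻¹' {0}ᶜ with hUdef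
  have hUo : IsOpen U := hF.continuousOn.isOpen_inter_preimage hD isOpen_compl_singleton
  have hsU : s ∈ U := ⟨hs, hFs⟩
  have hFa : AnalyticOnNhd ℂ F U := (hF.analyticOnNhd hD).mono Set.inter_subset_left
  have hF0 : ∀ z ∈ U, F z ≠ 0 := fun z hz => hz.2
  have hLa : AnalyticOnNhd ℂ L U :=
    (((hF.analyticOnNhd hD).deriv).mono Set.inter_subset_left).div hFa hF0
  have hkey : ∀ n : ℕ, iteratedDeriv (n + 1) F s =
      ∑ i ∈ Finset.range (n + 1), (n.choose i : ℂ) *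
        (iteratedDeriv i L s * iteratedDeriv (n - i) F s) := by
    intro n
    have hev : deriv F =ᶠ[nhds s] fun w => L w * F w := by
      filter_upwards [hUo.mem_nhds hsU] with z hz
      exact (div_mul_cancel₀ (deriv F z) (hF0 z hz)).symm
    rw [iteratedDeriv_succ', Filter.EventuallyEq.iteratedDeriv_eq n hev,
      st17_leibniz hUo hLa hFa n s hsU]
  set c : ℕ → ℂ := fun j => iteratedDeriv j F s / ((j.factorial : ℂ) * F s) with hcdef
  set d : ℕ → ℂ := fun m => iteratedDeriv m L s / ((m.factorial : ℂ)) with hddef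
  have hc0 : c 0 = 1 := by
    simp only [hcdef, iteratedDeriv_zero, Nat.factorial_zero, Nat.cast_one, one_mul]
    exact div_self hFs
  have hrec : ∀ n : ℕ, ((n : ℂ) + 1) * c (n + 1) =
      ∑ m ∈ Finset.range (n + 1), d m * c (n - m) := by
    intro n
    have h1 : c (n + 1) = (∑ i ∈ Finset.range (n + 1), (n.choose i : ℂ) *
        (iteratedDeriv i L s * iteratedDeriv (n - i) F s)) /
          (((n + 1).factorial : ℂ) * F s) := by
      rw [hcdef]; simp only; rw [hkey n]
    rw [h1, Finset.sum_div, Finset.mul_sum]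
    refine Finset.sum_congr rfl fun i hi => ?_
    have hin : i ≤ n := Nat.lt_succ_iff.mp (Finset.mem_range.mp hi)
    have hfac : (n.choose i : ℂ) * (i.factorial : ℂ) * ((n - i).factorial : ℂ)
        = (n.factorial : ℂ) := by
      exact_mod_cast congrArg (Nat.cast (R := ℂ)) (Nat.choose_mul_factorial_mul_factorial hin)
    have hf1 : (i.factorial : ℂ) ≠ 0 := Nat.cast_ne_zero.mpr i.factorial_ne_zero
    have hf2 : ((n - i).factorial : ℂ) ≠ 0 := Nat.cast_ne_zero.mpr (n - i).factorial_ne_zero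
    have hf3 : ((n).factorial : ℂ) ≠ 0 := Nat.cast_ne_zero.mpr (n).factorial_ne_zero
    have hn1 : ((n : ℂ) + 1) ≠ 0 := by
      rw [show ((n : ℂ) + 1) = ((n + 1 : ℕ) : ℂ) by push_cast; ring]
      exact Nat.cast_ne_zero.mpr (Nat.succ_ne_zero n)
    have hfs' : (((n + 1).factorial : ℂ)) = ((n : ℂ) + 1) * (n.factorial : ℂ) := by
      rw [Nat.factorial_succ]; push_cast; ring
    have hC : (n.choose i : ℂ) = (n.factorial : ℂ) /
        ((i.factorial : ℂ) * ((n - i).factorial : ℂ)) := by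
      field_simp
      linear_combination hfac
    rw [hddef, hcdef]; simp only
    rw [hC, hfs']
    field_simp
  have hdn : ∀ n : ℕ, d n = ((n : ℂ) + 1) * c (n + 1) - ∑ m ∈ Finset.range n, d m * c (n - m) := by
    intro n
    have h := hrec n
    rw [Finset.sum_range_succ, Nat.sub_self, hc0, mul_one] at h
    rw [h, add_sub_cancel_left]
  have habsn1 : ∀ n : ℕ, ‖(n : ℂ) + 1‖ = (n : ℝ) + 1 := by
    intro n
    rw [show ((n : ℂ) + 1) = ((n + 1 : ℕ) : ℂ) by push_cast; ring, Complex.norm_natCast]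
    push_cast; ring
  have hA : ∀ j : ℕ, ‖c j‖
      = ‖iteratedDeriv j F s / F s‖ / (j.factorial : ℝ) := by
    intro j
    rw [hcdef]; simp only
    rw [norm_div, norm_div, norm_mul, Complex.norm_natCast]
    ring
  have hDd : ∀ m : ℕ, ‖d m‖
      = ‖iteratedDeriv m L s‖ / (m.factorial : ℝ) := by
    intro m; rw [hddef]; simp only; rw [norm_div, Complex.norm_natCast]
  have hmem1 : (1 : ℕ) ∈ Finset.Icc 1 k := Finset.mem_Icc.mpr ⟨le_refl 1, hk⟩
  have hM0 : 0 ≤ M := by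
    rw [hM]
    refine le_trans ?_ (Finset.le_sup' _ hmem1)
    exact Real.rpow_nonneg (div_nonneg (norm_nonneg _) (Nat.cast_nonneg _)) _
  have hN0 : 0 ≤ N := by
    rw [hN]
    refine le_trans ?_ (Finset.le_sup' _ hmem1)
    exact Real.rpow_nonneg (div_nonneg (norm_nonneg _) (Nat.cast_nonneg _)) _
  have hMj : ∀ j, 1 ≤ j → j ≤ k → ‖c j‖ ≤ M ^ j := by
    intro j h1 h2
    have ht : (‖c j‖) ^ ((j : ℝ))⁻¹ ≤ M := by
      rw [hM, hA j]
      exact Finset.le_sup' (fun j => (‖iteratedDeriv j F s / F s‖ /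
        (j.factorial : ℝ)) ^ ((j : ℝ))⁻¹) (Finset.mem_Icc.mpr ⟨h1, h2⟩)
    calc ‖c j‖ = ((‖c j‖) ^ ((j : ℝ))⁻¹) ^ j :=
          (Real.rpow_inv_natCast_pow (norm_nonneg _) (by omega)).symm
      _ ≤ M ^ j := pow_le_pow_left₀ (Real.rpow_nonneg (norm_nonneg _) _) ht j
  have hNj : ∀ m, m + 1 ≤ k → ‖d m‖ ≤ ((m : ℝ) + 1) * N ^ (m + 1) := by
    intro m hm
    have ht : (‖iteratedDeriv m L s‖ / (((m + 1).factorial : ℝ)))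
        ^ (((m + 1 : ℕ) : ℝ))⁻¹ ≤ N := by
      rw [hN]
      have h := Finset.le_sup' (fun j => (‖iteratedDeriv (j - 1) L s‖ /
          (j.factorial : ℝ)) ^ ((j : ℝ))⁻¹) (Finset.mem_Icc.mpr ⟨Nat.le_add_left 1 m, hm⟩)
      rwa [Nat.add_sub_cancel] at h
    have h0 : (0 : ℝ) ≤ ‖iteratedDeriv m L s‖ / (((m + 1).factorial : ℝ)) := by
      positivity
    have hb : ‖iteratedDeriv m L s‖ / (((m + 1).factorial : ℝ)) ≤ N ^ (m + 1) := by
      calc ‖iteratedDeriv m L s‖ / (((m + 1).factorial : ℝ))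
          = ((‖iteratedDeriv m L s‖ / (((m + 1).factorial : ℝ)))
            ^ (((m + 1 : ℕ) : ℝ))⁻¹) ^ (m + 1) :=
            (Real.rpow_inv_natCast_pow h0 (by omega)).symm
        _ ≤ N ^ (m + 1) := pow_le_pow_left₀ (Real.rpow_nonneg h0 _) ht _
    rw [hDd m]
    have hmf : (0 : ℝ) < (m.factorial : ℝ) := by positivity
    have hfact : (((m + 1).factorial : ℝ)) = ((m : ℝ) + 1) * (m.factorial : ℝ) := by
      rw [Nat.factorial_succ]; push_cast; ring
    rw [hfact, div_le_iff₀ (by positivity)] at hb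
    rw [div_le_iff₀ hmf]
    exact le_of_le_of_eq hb (by ring)
  have claimI : ∀ n, n + 1 ≤ k →
      ‖d n‖ ≤ ((n : ℝ) + 1) * 2 ^ n * M ^ (n + 1) := by
    intro n
    induction n using Nat.strong_induction_on with
    | _ n ih =>
      intro hnk
      have habs : ‖d n‖ ≤ ((n : ℝ) + 1) * ‖c (n + 1)‖ +
          ∑ m ∈ Finset.range n, ‖d m‖ * ‖c (n - m)‖ := by
        rw [hdn n]
        refine le_trans (norm_sub_le _ _) (add_le_add ?_ ?_)
        · rw [norm_mul, habsn1 n]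
        · refine le_trans (norm_sum_le _ _) ?_
          exact le_of_eq (Finset.sum_congr rfl fun m _ => norm_mul _ _)
      have hsum_le : ∑ m ∈ Finset.range n, ‖d m‖ * ‖c (n - m)‖ ≤
          ∑ m ∈ Finset.range n, ((m : ℝ) + 1) * 2 ^ m * M ^ (n + 1) := by
        refine Finset.sum_le_sum fun m hm => ?_
        have hmn : m < n := Finset.mem_range.mp hm
        have h1 := ih m hmn (by omega)
        have h2 := hMj (n - m) (by omega) (by omega)
        have h3 := mul_le_mul h1 h2 (norm_nonneg _) (by positivity)
        refine le_trans h3 (le_of_eq ?_)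
        have hexp : M ^ (m + 1) * M ^ (n - m) = M ^ (n + 1) := by
          rw [← pow_add]; congr 1; omega
        calc ((m : ℝ) + 1) * 2 ^ m * M ^ (m + 1) * M ^ (n - m)
            = ((m : ℝ) + 1) * 2 ^ m * (M ^ (m + 1) * M ^ (n - m)) := by ring
          _ = ((m : ℝ) + 1) * 2 ^ m * M ^ (n + 1) := by rw [hexp]
      have hMn1 := hMj (n + 1) (by omega) hnk
      have hcast : ((n : ℝ) + 1) + ∑ m ∈ Finset.range n, ((m : ℝ) + 1) * 2 ^ m ≤
          ((n : ℝ) + 1) * 2 ^ n := by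
        exact_mod_cast st17_nat1 n
      calc ‖d n‖
          ≤ ((n : ℝ) + 1) * ‖c (n + 1)‖ +
            ∑ m ∈ Finset.range n, ‖d m‖ * ‖c (n - m)‖ := habs
        _ ≤ ((n : ℝ) + 1) * M ^ (n + 1) +
            ∑ m ∈ Finset.range n, ((m : ℝ) + 1) * 2 ^ m * M ^ (n + 1) := by
            refine add_le_add (mul_le_mul_of_nonneg_left hMn1 (by positivity)) hsum_le
        _ = (((n : ℝ) + 1) + ∑ m ∈ Finset.range n, ((m : ℝ) + 1) * 2 ^ m) * M ^ (n + 1) := by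
            rw [← Finset.sum_mul]; ring
        _ ≤ (((n : ℝ) + 1) * 2 ^ n) * M ^ (n + 1) :=
            mul_le_mul_of_nonneg_right hcast (by positivity)
        _ = ((n : ℝ) + 1) * 2 ^ n * M ^ (n + 1) := by ring
  have claimII : ∀ j, 1 ≤ j → j ≤ k → ‖c j‖ ≤ 2 ^ (j - 1) * N ^ j := by
    intro j
    induction j using Nat.strong_induction_on with
    | _ j ih =>
      intro h1 h2
      obtain ⟨n, rfl⟩ : ∃ n, j = n + 1 := ⟨j - 1, by omega⟩
      have e1 : ((n : ℝ) + 1) * ‖c (n + 1)‖ =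
          ‖∑ m ∈ Finset.range (n + 1), d m * c (n - m)‖ := by
        rw [← hrec n, norm_mul, habsn1 n]
      have e2 : ‖∑ m ∈ Finset.range (n + 1), d m * c (n - m)‖ ≤
          ∑ m ∈ Finset.range n, ‖d m‖ * ‖c (n - m)‖ +
            ‖d n‖ := by
        refine le_trans (norm_sum_le _ _) ?_
        rw [Finset.sum_range_succ, Nat.sub_self, hc0]
        refine add_le_add (le_of_eq (Finset.sum_congr rfl fun m _ => norm_mul _ _)) ?_
        rw [norm_mul, norm_one, mul_one]
      have hsum_le : ∑ m ∈ Finset.range n, ‖d m‖ * ‖c (n - m)‖ ≤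
          ∑ m ∈ Finset.range n, ((m : ℝ) + 1) * 2 ^ (n - 1 - m) * N ^ (n + 1) := by
        refine Finset.sum_le_sum fun m hm => ?_
        have hmn : m < n := Finset.mem_range.mp hm
        have hd1 := hNj m (by omega)
        have hc1 := ih (n - m) (by omega) (by omega) (by omega)
        have h3 := mul_le_mul hd1 hc1 (norm_nonneg _) (by positivity)
        refine le_trans h3 (le_of_eq ?_)
        have hexp : N ^ (m + 1) * N ^ (n - m) = N ^ (n + 1) := by
          rw [← pow_add]; congr 1; omega
        have hexp2 : (n - m - 1 : ℕ) = n - 1 - m := by omega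
        calc ((m : ℝ) + 1) * N ^ (m + 1) * (2 ^ (n - m - 1) * N ^ (n - m))
            = ((m : ℝ) + 1) * 2 ^ (n - m - 1) * (N ^ (m + 1) * N ^ (n - m)) := by ring
          _ = ((m : ℝ) + 1) * 2 ^ (n - 1 - m) * N ^ (n + 1) := by rw [hexp, hexp2]
      have hdn1 := hNj n h2
      have hcast : (∑ m ∈ Finset.range n, ((m : ℝ) + 1) * 2 ^ (n - 1 - m)) + ((n : ℝ) + 1) ≤
          ((n : ℝ) + 1) * 2 ^ n := by
        exact_mod_cast st17_nat2 n
      have hmain : ((n : ℝ) + 1) * ‖c (n + 1)‖ ≤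
          ((n : ℝ) + 1) * (2 ^ n * N ^ (n + 1)) := by
        rw [e1]
        calc ‖∑ m ∈ Finset.range (n + 1), d m * c (n - m)‖
            ≤ ∑ m ∈ Finset.range n, ‖d m‖ * ‖c (n - m)‖ +
              ‖d n‖ := e2
          _ ≤ ∑ m ∈ Finset.range n, ((m : ℝ) + 1) * 2 ^ (n - 1 - m) * N ^ (n + 1) +
              ((n : ℝ) + 1) * N ^ (n + 1) := add_le_add hsum_le hdn1
          _ = ((∑ m ∈ Finset.range n, ((m : ℝ) + 1) * 2 ^ (n - 1 - m)) + ((n : ℝ) + 1))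
              * N ^ (n + 1) := by rw [← Finset.sum_mul]; ring
          _ ≤ (((n : ℝ) + 1) * 2 ^ n) * N ^ (n + 1) :=
              mul_le_mul_of_nonneg_right hcast (by positivity)
          _ = ((n : ℝ) + 1) * (2 ^ n * N ^ (n + 1)) := by ring
      have hpos : (0 : ℝ) < (n : ℝ) + 1 := by positivity
      have := le_of_mul_le_mul_left hmain hpos
      simpa using this
  constructor
  · rw [div_le_iff₀ (by norm_num : (0 : ℝ) < 2), hM]
    apply Finset.sup'_le
    intro j hj
    obtain ⟨h1, h2⟩ := Finset.mem_Icc.mp hj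
    rw [← hA j]
    have hb : ‖c j‖ ≤ (N * 2) ^ j := by
      refine le_trans (claimII j h1 h2) ?_
      rw [mul_pow, mul_comm (N ^ j)]
      refine mul_le_mul_of_nonneg_right (pow_le_pow_right₀ (by norm_num) (by omega))
        (pow_nonneg hN0 j)
    calc (‖c j‖) ^ ((j : ℝ))⁻¹
        ≤ ((N * 2) ^ j) ^ ((j : ℝ))⁻¹ :=
          Real.rpow_le_rpow (norm_nonneg _) hb (by positivity)
      _ = N * 2 := Real.pow_rpow_inv_natCast (by positivity) (by omega)
  · rw [hN]
    apply Finset.sup'_le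
    intro j hj
    obtain ⟨h1, h2⟩ := Finset.mem_Icc.mp hj
    obtain ⟨n, rfl⟩ : ∃ n, j = n + 1 := ⟨j - 1, by omega⟩
    simp only [Nat.add_sub_cancel]
    have hitd : ‖iteratedDeriv n L s‖ = ‖d n‖ * (n.factorial : ℝ) := by
      rw [hDd n, div_mul_cancel₀]
      positivity
    have hb : ‖iteratedDeriv n L s‖ / (((n + 1).factorial : ℝ)) ≤ (2 * M) ^ (n + 1) := by
      rw [hitd]
      have hfact : (((n + 1).factorial : ℝ)) = ((n : ℝ) + 1) * (n.factorial : ℝ) := by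
        rw [Nat.factorial_succ]; push_cast; ring
      rw [hfact]
      have hd1 := claimI n h2
      have hmf : (0 : ℝ) < (n.factorial : ℝ) := by positivity
      have step1 : ‖d n‖ * (n.factorial : ℝ) / (((n : ℝ) + 1) * (n.factorial : ℝ))
          = ‖d n‖ / ((n : ℝ) + 1) := by
        field_simp
      rw [step1]
      rw [div_le_iff₀ (by positivity : (0 : ℝ) < (n : ℝ) + 1)]
      refine le_trans hd1 ?_
      calc ((n : ℝ) + 1) * 2 ^ n * M ^ (n + 1)
          ≤ ((n : ℝ) + 1) * 2 ^ (n + 1) * M ^ (n + 1) := by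
            refine mul_le_mul_of_nonneg_right
              (mul_le_mul_of_nonneg_left (pow_le_pow_right₀ (by norm_num) (by omega))
                (by positivity)) (by positivity)
        _ = (2 * M) ^ (n + 1) * ((n : ℝ) + 1) := by rw [mul_pow]; ring
    calc (‖iteratedDeriv n L s‖ / (((n + 1).factorial : ℝ))) ^ (((n + 1 : ℕ) : ℝ))⁻¹
        ≤ ((2 * M) ^ (n + 1)) ^ (((n + 1 : ℕ) : ℝ))⁻¹ :=
          Real.rpow_le_rpow (by positivity) hb (by positivity)
      _ = 2 * M := Real.pow_rpow_inv_natCast (by positivity) (by omega)
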